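/- For positive integers m and n with n > 1, the number of cliques of order m in the unitary Cayley graph G_{ℤ/nℤ} equals ∏_{k=1}^{m} S_{k-1}(n)/k, where S_0(n) = n and S_r(n) = ∏_{p^α ∥ n} p^(α-1)(p - r) for r ≥ 1 (with the convention that a factor is 0 when p < r... i.e., the product is 0 if some prime factor of n is less than r). -/

import Mathlib

open Finset

/-- The unitary Cayley graph of a commutative ring: `a` is adjacent to `b`
iff `a ≠ b` and `a - b` is a unit. -/
def unitaryCayley (X : Type*) [CommRing X] : SimpleGraph X where
  Adj a b := a ≠ b ∧ IsUnit (a - b)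
  symm := by
    constructor
    rintro a b ⟨h1, h2⟩
    exact ⟨h1.symm, neg_sub a b ▸ h2.neg⟩
  loopless := by constructor; rintro a ⟨h, _⟩; exact h rfl

/-- The Schemmel totient function, with the convention `S 0 n = n`. -/
noncomputable def S (r n : ℕ) : ℕ :=
  if r = 0 then n else ∏ p ∈ n.primeFactors, p ^ (n.factorization p - 1) * (p - r)

section Aux

lemma isUnit_prod_iff' {α β : Type*} [CommMonoid α] [CommMonoid β] {x : α × β} :
    IsUnit x ↔ IsUnit x.1 ∧ IsUnit x.2 := by
  constructor
  · intro h
    exact ⟨h.map (MonoidHom.fst α β), h.map (MonoidHom.snd α β)⟩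
  · rintro ⟨⟨u, hu⟩, ⟨v, hv⟩⟩
    rw [isUnit_iff_exists_inv]
    refine ⟨(↑u⁻¹, ↑v⁻¹), ?_⟩
    rw [Prod.ext_iff]
    constructor <;> simp [← hu, ← hv]

lemma S_one (r : ℕ) : S r 1 = 1 := by
  rcases eq_or_ne r 0 with rfl | hr <;> simp [S, *]

lemma S_prime_pow {p : ℕ} (hp : p.Prime) {e : ℕ} (he : e ≠ 0) (r : ℕ) :
    S r (p ^ e) = p ^ (e - 1) * (p - r) := by
  rcases eq_or_ne r 0 with rfl | hr
  · rw [S, if_pos rfl, Nat.sub_zero, ← pow_succ,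
      Nat.sub_add_cancel (Nat.one_le_iff_ne_zero.mpr he)]
  · simp only [S, if_neg hr]
    rw [Nat.primeFactors_pow p he, hp.primeFactors, Finset.prod_singleton,
      hp.factorization_pow, Finsupp.single_eq_same]

lemma S_mul {a b : ℕ} (hab : Nat.Coprime a b) (ha : a ≠ 0) (hb : b ≠ 0) (r : ℕ) :
    S r (a * b) = S r a * S r b := by
  rcases eq_or_ne r 0 with rfl | hr
  · simp [S]
  · simp only [S, if_neg hr]
    have key : ∀ u v : ℕ, u ≠ 0 → v ≠ 0 → Nat.Coprime u v →
        (∏ p ∈ u.primeFactors, p ^ ((u * v).factorization p - 1) * (p - r))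
          = ∏ p ∈ u.primeFactors, p ^ (u.factorization p - 1) * (p - r) := by
      intro u v hu hv huv
      refine Finset.prod_congr rfl fun p hpu => ?_
      have hp := Nat.prime_of_mem_primeFactors hpu
      have hpv : v.factorization p = 0 := by
        apply Nat.factorization_eq_zero_of_not_dvd
        intro hdvd
        have h1 := Nat.dvd_gcd (Nat.dvd_of_mem_primeFactors hpu) hdvd
        rw [huv.gcd_eq_one, Nat.dvd_one] at h1
        exact hp.one_lt.ne' h1
      rw [Nat.factorization_mul hu hv, Finsupp.add_apply, hpv, Nat.add_zero]
    rw [Nat.primeFactors_mul ha hb, Finset.prod_union hab.disjoint_primeFactors,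
      key a b ha hb hab, Nat.mul_comm a b, key b a hb ha hab.symm]

/-- Number of tuples with pairwise unit differences. -/
noncomputable def Tc (m n : ℕ) : ℕ :=
  Nat.card {f : Fin m → ZMod n // ∀ i j : Fin m, i ≠ j → IsUnit (f i - f j)}

lemma Tc_one (m : ℕ) : Tc m 1 = 1 := by
  have : ∀ f : Fin m → ZMod 1, ∀ i j : Fin m, i ≠ j → IsUnit (f i - f j) := by
    intro f i j _
    exact isUnit_of_subsingleton _
  haveI : Unique {f : Fin m → ZMod 1 // ∀ i j : Fin m, i ≠ j → IsUnit (f i - f j)} :=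
    uniqueOfSubsingleton ⟨fun _ => 0, this _⟩
  exact Nat.card_unique

lemma Tc_mul (m : ℕ) {a b : ℕ} (hab : Nat.Coprime a b) :
    Tc m (a * b) = Tc m a * Tc m b := by
  rw [Tc, Tc, Tc, ← Nat.card_prod]
  apply Nat.card_congr
  set c := ZMod.chineseRemainder hab with hc
  let e1 : (Fin m → ZMod (a * b)) ≃ (Fin m → ZMod a) × (Fin m → ZMod b) :=
    (Equiv.arrowCongr (Equiv.refl (Fin m)) c.toEquiv).trans
      (Equiv.arrowProdEquivProdArrow _ _ _)
  refine (Equiv.subtypeEquiv e1 (fun f => ?_)).trans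
    (Equiv.subtypeProdEquivProd
      (p := fun g : Fin m → ZMod a => ∀ i j : Fin m, i ≠ j → IsUnit (g i - g j))
      (q := fun g : Fin m → ZMod b => ∀ i j : Fin m, i ≠ j → IsUnit (g i - g j)))
  have key : ∀ x y : ZMod (a * b),
      IsUnit (x - y) ↔ IsUnit ((c x).1 - (c y).1) ∧ IsUnit ((c x).2 - (c y).2) := by
    intro x y
    constructor
    · intro h
      have h2 : IsUnit (c (x - y)) := h.map c.toRingHom
      rw [map_sub] at h2
      exact isUnit_prod_iff'.mp h2
    · intro h
      have h2 : IsUnit (c x - c y) := isUnit_prod_iff'.mpr h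
      have h3 := h2.map c.symm.toRingHom
      rw [← map_sub] at h3
      simpa using h3
  have hf1 : ∀ i, (e1 f).1 i = (c (f i)).1 := fun i => rfl
  have hf2 : ∀ i, (e1 f).2 i = (c (f i)).2 := fun i => rfl
  constructor
  · intro hf
    constructor <;> intro i j hij
    · rw [hf1, hf1]; exact ((key _ _).mp (hf i j hij)).1
    · rw [hf2, hf2]; exact ((key _ _).mp (hf i j hij)).2
  · intro hf i j hij
    refine (key _ _).mpr ⟨?_, ?_⟩
    · rw [← hf1, ← hf1]; exact hf.1 i j hij
    · rw [← hf2, ← hf2]; exact hf.2 i j hij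

section PrimePow

variable {p e : ℕ} (hp : p.Prime) (he : e ≠ 0)

lemma isUnit_zmod_prime_pow_iff (hp : p.Prime) (he : e ≠ 0) (z : ZMod (p ^ e)) :
    IsUnit z ↔ ZMod.castHom (dvd_pow_self p he) (ZMod p) z ≠ 0 := by
  haveI : NeZero (p ^ e) := ⟨pow_ne_zero e hp.pos.ne'⟩
  conv_lhs => rw [← ZMod.natCast_zmod_val z]
  rw [ZMod.isUnit_iff_coprime, Nat.coprime_pow_right_iff (Nat.pos_of_ne_zero he),
    Nat.coprime_comm, hp.coprime_iff_not_dvd,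
    ZMod.castHom_apply, ← ZMod.natCast_val, Ne, ZMod.natCast_eq_zero_iff]

/-- The splitting bijection for `ZMod (p ^ e)`. -/
lemma exists_split (hp : p.Prime) (he : e ≠ 0) :
    ∃ Φ : ZMod (p ^ e) ≃ ZMod p × Fin (p ^ (e - 1)),
      ∀ x, (Φ x).1 = ZMod.castHom (dvd_pow_self p he) (ZMod p) x := by
  haveI : NeZero (p ^ e) := ⟨pow_ne_zero e hp.pos.ne'⟩
  haveI : NeZero p := ⟨hp.pos.ne'⟩
  have hq : p ^ (e - 1) * p = p ^ e := by
    rw [← pow_succ, Nat.sub_add_cancel (Nat.one_le_iff_ne_zero.mpr he)]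
  have hdiv : ∀ x : ZMod (p ^ e), x.val / p < p ^ (e - 1) := by
    intro x
    rw [Nat.div_lt_iff_lt_mul hp.pos, hq]
    exact x.val_lt
  set g : ZMod (p ^ e) → ZMod p × Fin (p ^ (e - 1)) :=
    fun x => (ZMod.castHom (dvd_pow_self p he) (ZMod p) x, ⟨x.val / p, hdiv x⟩) with hg
  have hinj : Function.Injective g := by
    intro x y hxy
    rw [Prod.ext_iff] at hxy
    obtain ⟨h1, h2⟩ := hxy
    have h1' : x.val % p = y.val % p := by
      have : ((x.val : ℕ) : ZMod p) = ((y.val : ℕ) : ZMod p) := by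
        simpa only [hg, ZMod.castHom_apply, ← ZMod.natCast_val] using h1
      rwa [ZMod.natCast_eq_natCast_iff'] at this
    have h2' : x.val / p = y.val / p := by
      simpa using congrArg Fin.val h2
    have : x.val = y.val := by
      rw [← Nat.div_add_mod x.val p, ← Nat.div_add_mod y.val p, h1', h2']
    exact ZMod.val_injective _ this
  have hcard : Fintype.card (ZMod (p ^ e)) = Fintype.card (ZMod p × Fin (p ^ (e - 1))) := by
    rw [ZMod.card, Fintype.card_prod, ZMod.card, Fintype.card_fin, ← hq, Nat.mul_comm]
  exact ⟨Equiv.ofBijective g ((Fintype.bijective_iff_injective_and_card g).mpr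
    ⟨hinj, hcard⟩), fun x => rfl⟩

/-- A little equivalence: subtype of a product with a condition on the first factor. -/
def subtypeFstEquiv {A B : Type*} (P : A → Prop) :
    {x : A × B // P x.1} ≃ {a : A // P a} × B where
  toFun x := (⟨x.1.1, x.2⟩, x.1.2)
  invFun y := ⟨(y.1.1, y.2), y.1.2⟩
  left_inv := by rintro ⟨⟨a, b⟩, h⟩; rfl
  right_inv := by rintro ⟨⟨a, h⟩, b⟩; rfl

lemma Tc_prime_pow (m : ℕ) (hp : p.Prime) (he : e ≠ 0) :
    Tc m (p ^ e) = p.descFactorial m * (p ^ (e - 1)) ^ m := by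
  obtain ⟨Φ, hΦ⟩ := exists_split hp he
  set π := ZMod.castHom (dvd_pow_self p he) (ZMod p) with hπ
  rw [Tc]
  have step1 := Nat.card_congr
    (Equiv.subtypeEquiv (Equiv.arrowCongr (Equiv.refl (Fin m)) Φ)
      (p := fun f : Fin m → ZMod (p ^ e) => ∀ i j : Fin m, i ≠ j → IsUnit (f i - f j))
      (q := fun h : Fin m → ZMod p × Fin (p ^ (e - 1)) =>
        ∀ i j : Fin m, i ≠ j → (h i).1 ≠ (h j).1)
      (fun f => by
        constructor
        · intro hf i j hij
          simp only [Equiv.arrowCongr_apply, Equiv.refl_symm, Equiv.refl_apply,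
            Function.comp_apply, hΦ]
          have := (isUnit_zmod_prime_pow_iff hp he _).mp (hf i j hij)
          rw [map_sub] at this
          exact sub_ne_zero.mp this
        · intro hf i j hij
          apply (isUnit_zmod_prime_pow_iff hp he _).mpr
          rw [map_sub]
          apply sub_ne_zero.mpr
          have := hf i j hij
          simpa only [Equiv.arrowCongr_apply, Equiv.refl_symm, Equiv.refl_apply,
            Function.comp_apply, hΦ] using this))
  rw [step1]
  have step2 := Nat.card_congr
    (Equiv.subtypeEquiv (Equiv.arrowProdEquivProdArrow (Fin m) (fun _ => ZMod p) (fun _ => Fin (p ^ (e - 1))))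
      (p := fun h : Fin m → ZMod p × Fin (p ^ (e - 1)) =>
        ∀ i j : Fin m, i ≠ j → (h i).1 ≠ (h j).1)
      (q := fun g : (Fin m → ZMod p) × (Fin m → Fin (p ^ (e - 1))) =>
        ∀ i j : Fin m, i ≠ j → g.1 i ≠ g.1 j)
      (fun h => Iff.rfl))
  rw [step2]
  have step3 := Nat.card_congr
    (subtypeFstEquiv (fun g : Fin m → ZMod p => ∀ i j : Fin m, i ≠ j → g i ≠ g j)
      (B := Fin m → Fin (p ^ (e - 1))))
  rw [step3, Nat.card_prod]
  have step4 := Nat.card_congr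
    ((Equiv.subtypeEquiv (Equiv.refl (Fin m → ZMod p))
      (p := fun g : Fin m → ZMod p => ∀ i j : Fin m, i ≠ j → g i ≠ g j)
      (q := fun g : Fin m → ZMod p => Function.Injective g)
      (fun g => by
        constructor
        · intro hg x y hxy
          by_contra hne
          exact hg x y hne hxy
        · intro hg i j hij hgij
          exact hij (hg hgij))).trans
      (Equiv.subtypeInjectiveEquivEmbedding (Fin m) (ZMod p)))
  rw [step4]
  haveI : NeZero p := ⟨hp.pos.ne'⟩
  rw [Nat.card_eq_fintype_card, Nat.card_eq_fintype_card, Fintype.card_embedding_eq,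
    Fintype.card_fun, ZMod.card, Fintype.card_fin, Fintype.card_fin]

end PrimePow

lemma Tc_eq (m : ℕ) : ∀ n : ℕ, n ≠ 0 → Tc m n = ∏ k ∈ range m, S k n := by
  refine Nat.recOnPrimePow ?_ ?_ ?_
  · intro h; exact absurd rfl h
  · intro _
    rw [Tc_one]
    simp [S_one]
  · intro a p e hp hpa he ih hne
    have ha : a ≠ 0 := fun h => hpa (h ▸ dvd_zero p)
    have hcop : Nat.Coprime (p ^ e) a :=
      Nat.Coprime.pow_left _ ((hp.coprime_iff_not_dvd).mpr hpa)
    rw [Tc_mul m hcop, Tc_prime_pow m hp he.ne', ih ha]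
    have : ∀ k ∈ range m, S k (p ^ e * a) = S k (p ^ e) * S k a := fun k _ =>
      S_mul hcop (pow_ne_zero e hp.pos.ne') ha k
    rw [Finset.prod_congr rfl this, Finset.prod_mul_distrib]
    congr 1
    have : ∀ k ∈ range m, S k (p ^ e) = p ^ (e - 1) * (p - k) := fun k _ =>
      S_prime_pow hp he.ne' k
    rw [Finset.prod_congr rfl this, Finset.prod_mul_distrib, Finset.prod_const,
      Finset.card_range, Nat.descFactorial_eq_prod_range, Nat.mul_comm]

lemma clique_card (m n : ℕ) (hn : 1 < n) :
    Tc m n = Nat.card {s : Finset (ZMod n) // (unitaryCayley (ZMod n)).IsNClique m s}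
      * m.factorial := by
  haveI : Fact (1 < n) := ⟨hn⟩
  haveI : NeZero n := ⟨by omega⟩
  have hinj : ∀ f : Fin m → ZMod n, (∀ i j : Fin m, i ≠ j → IsUnit (f i - f j)) →
      Function.Injective f := by
    intro f hf i j hij
    by_contra hne
    have h := hf i j hne
    rw [hij, sub_self] at h
    exact not_isUnit_zero h
  let C := {s : Finset (ZMod n) // (unitaryCayley (ZMod n)).IsNClique m s}
  let F : {f : Fin m → ZMod n // ∀ i j : Fin m, i ≠ j → IsUnit (f i - f j)} → C := fun x =>
    ⟨Finset.image x.1 Finset.univ, by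
      constructor
      · intro u hu v hv huv
        simp only [Finset.coe_image, Set.mem_image, Finset.mem_coe, Finset.mem_univ,
          true_and] at hu hv
        obtain ⟨i, rfl⟩ := hu
        obtain ⟨j, rfl⟩ := hv
        exact ⟨huv, x.2 i j (fun h => huv (by rw [h]))⟩
      · rw [Finset.card_image_of_injective _ (hinj x.1 x.2), Finset.card_univ,
          Fintype.card_fin]⟩
  have e2 : ∀ c : C,
      {x : {f : Fin m → ZMod n // ∀ i j : Fin m, i ≠ j → IsUnit (f i - f j)} // F x = c}
        ≃ (Fin m ≃ {y : ZMod n // y ∈ c.1}) := by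
    intro c
    have hmem : ∀ x : {x : {f : Fin m → ZMod n //
        ∀ i j : Fin m, i ≠ j → IsUnit (f i - f j)} // F x = c},
        ∀ i : Fin m, x.1.1 i ∈ c.1 := by
      intro x i
      have h1 : Finset.image x.1.1 Finset.univ = c.1 := congrArg Subtype.val x.2
      rw [← h1]
      exact Finset.mem_image_of_mem _ (Finset.mem_univ i)
    have hP : ∀ e : Fin m ≃ {y : ZMod n // y ∈ c.1}, ∀ i j : Fin m, i ≠ j →
        IsUnit ((e i : ZMod n) - (e j : ZMod n)) := by
      intro e i j hij
      have hne : (e i : ZMod n) ≠ (e j : ZMod n) := by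
        intro h
        exact hij (e.injective (Subtype.ext h))
      exact (c.2.1 (Finset.mem_coe.mpr (e i).2) (Finset.mem_coe.mpr (e j).2) hne).2
    have hFim : ∀ e : Fin m ≃ {y : ZMod n // y ∈ c.1},
        Finset.image (fun i => ((e i : ZMod n))) Finset.univ = c.1 := by
      intro e
      apply Finset.Subset.antisymm
      · intro y hy
        simp only [Finset.mem_image, Finset.mem_univ, true_and] at hy
        obtain ⟨i, rfl⟩ := hy
        exact (e i).2
      · intro y hy
        simp only [Finset.mem_image, Finset.mem_univ, true_and]
        exact ⟨e.symm ⟨y, hy⟩, by rw [Equiv.apply_symm_apply]⟩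
    have hbij : ∀ x : {x : {f : Fin m → ZMod n //
        ∀ i j : Fin m, i ≠ j → IsUnit (f i - f j)} // F x = c},
        Function.Bijective
          (fun i => (⟨x.1.1 i, hmem x i⟩ : {y : ZMod n // y ∈ c.1})) := by
      intro x
      constructor
      · intro i j hij
        exact hinj x.1.1 x.1.2 (congrArg Subtype.val hij)
      · rintro ⟨y, hy⟩
        have h1 : Finset.image x.1.1 Finset.univ = c.1 := congrArg Subtype.val x.2
        rw [← h1] at hy
        obtain ⟨i, _, rfl⟩ := Finset.mem_image.mp hy
        exact ⟨i, rfl⟩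
    exact
      { toFun := fun x => Equiv.ofBijective _ (hbij x)
        invFun := fun e => ⟨⟨fun i => (e i : ZMod n), hP e⟩, Subtype.ext (hFim e)⟩
        left_inv := fun x => Subtype.ext (Subtype.ext (funext fun i => rfl))
        right_inv := fun e => Equiv.ext fun i => Subtype.ext rfl }
  have ecard : ∀ c : C, {y : ZMod n // y ∈ c.1} ≃ Fin m := by
    intro c
    apply Fintype.equivFinOfCardEq
    rw [Fintype.card_coe]
    exact c.2.2
  calc Tc m n
      = Nat.card (Σ c : C, {x : {f : Fin m → ZMod n //
          ∀ i j : Fin m, i ≠ j → IsUnit (f i - f j)} // F x = c}) :=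
        (Nat.card_congr (Equiv.sigmaFiberEquiv F)).symm
    _ = Nat.card (Σ _c : C, Equiv.Perm (Fin m)) := Nat.card_congr
        (Equiv.sigmaCongrRight fun c => (e2 c).trans
          (Equiv.equivCongr (Equiv.refl (Fin m)) (ecard c)))
    _ = Nat.card (C × Equiv.Perm (Fin m)) := Nat.card_congr (Equiv.sigmaEquivProd C _)
    _ = Nat.card C * m.factorial := by
        rw [Nat.card_prod, Nat.card_eq_fintype_card (α := Equiv.Perm (Fin m)),
          Fintype.card_perm, Fintype.card_fin]

end Aux

theorem card_cliques_unitaryCayley (m n : ℕ) (hm : 0 < m) (hn : 1 < n) :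
    (Nat.card {s : Finset (ZMod n) // (unitaryCayley (ZMod n)).IsNClique m s} : ℚ) =
      ∏ k ∈ Finset.Icc 1 m, (S (k - 1) n : ℚ) / k := by
  have h1 := clique_card m n hn
  have h2 : Tc m n = ∏ k ∈ range m, S k n := Tc_eq m n (by omega)
  have h3 : (∏ k ∈ Finset.Icc 1 m, ((k : ℚ))) = (m.factorial : ℚ) := by
    rw [← Nat.cast_prod, ← Finset.Ico_add_one_right_eq_Icc, Finset.prod_Ico_id_eq_factorial]
  have h4 : (∏ k ∈ Finset.Icc 1 m, (S (k - 1) n : ℚ))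
      = ((∏ k ∈ range m, S k n : ℕ) : ℚ) := by
    rw [← Nat.cast_prod]
    congr 1
    rw [← Finset.Ico_add_one_right_eq_Icc, Finset.prod_Ico_eq_prod_range]
    simp
  rw [Finset.prod_div_distrib, h3, h4]
  rw [eq_div_iff (by exact_mod_cast Nat.factorial_ne_zero m)]
  exact_mod_cast (h1.symm.trans h2)
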